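/- arXiv:1905.00872 — 4 statements merged into one kernel-verified Lean document; each statement's English description precedes it below -/
import Mathlib

section
/- Let p be a prime and let A be a finite abelian p-group equipped with an action of a finite group H by group automorphisms, where p does not divide |H|. Then A decomposes as an internal direct sum A = A_1 ⊕ ⋯ ⊕ A_m of H-invariant subgroups such that each A_i is homocyclic, i.e., each A_i is isomorphic as an abstract abelian group to (ℤ/p^{e_i}ℤ)^{n_i} for some e_i ≥ 1 and n_i ≥ 1 (equivalently, A splits H-equivariantly into components with constant elementary divisors). -/
lemma exists_idem_pow {M : Type*} [Monoid M] [Finite M] (a : M) :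
    ∃ n, 1 ≤ n ∧ a ^ n * a ^ n = a ^ n := by
  have h0 : ∃ m d : ℕ, 1 ≤ m ∧ 1 ≤ d ∧ a ^ (m + d) = a ^ m := by
    obtain ⟨i, j, hne, h⟩ := Finite.exists_ne_map_eq_of_infinite (fun n : ℕ => a ^ n)
    rcases Nat.lt_or_ge i j with hij | hij
    · exact ⟨i + 1, j - i, by omega, by omega, by
        have : i + 1 + (j - i) = j + 1 := by omega
        rw [this, pow_succ, pow_succ, h]⟩
    · have hij' : j < i := by omega
      exact ⟨j + 1, i - j, by omega, by omega, by
        have : j + 1 + (i - j) = i + 1 := by omega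
        rw [this, pow_succ, pow_succ, h]⟩
  obtain ⟨m, d, hm, hd, hmd⟩ := h0
  have base : ∀ t, a ^ (m + t + d) = a ^ (m + t) := by
    intro t
    have h1 : m + t + d = m + d + t := by omega
    rw [h1, pow_add, hmd, ← pow_add]
  have claim : ∀ k s, a ^ (m + s + k * d) = a ^ (m + s) := by
    intro k
    induction k with
    | zero => simp
    | succ k ih =>
      intro s
      have h1 : m + s + (k + 1) * d = m + (s + k * d) + d := by ring
      rw [h1, base, ← Nat.add_assoc, ih]
  refine ⟨m * d, Nat.mul_pos hm hd, ?_⟩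
  have hmm : m ≤ m * d := Nat.le_mul_of_pos_right m (by omega)
  have h2 : m * d + m * d = m + (m * d - m) + m * d := by omega
  have h3 : m + (m * d - m) = m * d := by omega
  rw [← pow_add, h2, claim m (m * d - m), h3]

lemma homocyclic_of_socle {p E : ℕ} (hp : p.Prime) (hE : 1 ≤ E) (G : Type*) [AddCommGroup G]
    [Finite G]
    (h1 : ∀ x : G, p ^ E • x = 0)
    (h2 : ∀ x : G, p • x = 0 → ∃ y : G, p ^ (E - 1) • y = x) :
    ∃ n : ℕ, Nonempty (G ≃+ (Fin n → ZMod (p ^ E))) ∧ ((∃ x : G, x ≠ 0) → 1 ≤ n) := by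
  classical
  obtain ⟨ι, hι, nn, hnn, ⟨ψ0⟩⟩ := AddCommGroup.equiv_directSum_zmod_of_finite' G
  let e2 : (DirectSum ι fun i => ZMod (nn i)) ≃+ (∀ i, ZMod (nn i)) :=
    { DFinsupp.equivFunOnFintype with map_add' := fun f g => rfl }
  let ψ : G ≃+ (∀ i, ZMod (nn i)) := ψ0.trans e2
  have key : ∀ i, nn i = p ^ E := by
    intro i
    haveI : NeZero (nn i) := ⟨by have := hnn i; omega⟩
    have hx : p ^ E • (Pi.single i (1 : ZMod (nn i)) : ∀ j, ZMod (nn j)) = 0 := by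
      have := h1 (ψ.symm (Pi.single i 1))
      have h' := congrArg ψ this
      rwa [map_nsmul, AddEquiv.apply_symm_apply, map_zero] at h'
    have hx1 : ((p ^ E : ℕ) : ZMod (nn i)) = 0 := by
      have := congrFun hx i
      rw [Pi.smul_apply, Pi.single_eq_same, Pi.zero_apply] at this
      rwa [nsmul_eq_mul, mul_one] at this
    have hdvd : nn i ∣ p ^ E := (ZMod.natCast_eq_zero_iff _ _).mp hx1
    obtain ⟨f, hfE, hf⟩ := (Nat.dvd_prime_pow hp).mp hdvd
    have hf1 : 1 ≤ f := by
      rcases Nat.eq_zero_or_pos f with h0 | h0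
      · exfalso; have := hnn i; rw [hf, h0, pow_zero] at this; omega
      · exact h0
    by_contra hne
    have hfE' : f < E := by
      rcases Nat.lt_or_ge f E with h | h
      · exact h
      · exact absurd (hf.trans (by rw [Nat.le_antisymm hfE h])) hne
    set g : G := ψ.symm (Pi.single i ((p ^ (f - 1) : ℕ) : ZMod (nn i))) with hg
    have hpg : p • g = 0 := by
      apply ψ.injective
      rw [map_nsmul, AddEquiv.apply_symm_apply, map_zero]
      ext j
      rcases eq_or_ne j i with rfl | hj
      · rw [Pi.smul_apply, Pi.single_eq_same, Pi.zero_apply, nsmul_eq_mul]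
        have hmul : p * p ^ (f - 1) = p ^ f := by
          rw [← pow_succ']; congr 1; omega
        rw [← Nat.cast_mul, hmul, ← hf, ZMod.natCast_self]
      · simp [Pi.single_eq_of_ne hj]
    obtain ⟨y, hy⟩ := h2 g hpg
    have hy' : p ^ (E - 1) • ψ y = Pi.single i ((p ^ (f - 1) : ℕ) : ZMod (nn i)) := by
      rw [← map_nsmul, hy, hg, AddEquiv.apply_symm_apply]
    have hyi := congrFun hy' i
    rw [Pi.smul_apply, Pi.single_eq_same, nsmul_eq_mul] at hyi
    have hcast0 : ((p ^ (E - 1) : ℕ) : ZMod (nn i)) = 0 := by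
      rw [ZMod.natCast_eq_zero_iff, hf]
      exact pow_dvd_pow p (by omega)
    rw [hcast0, zero_mul] at hyi
    have : nn i ∣ p ^ (f - 1) :=
      (ZMod.natCast_eq_zero_iff _ _).mp hyi.symm
    rw [hf] at this
    have := (Nat.pow_dvd_pow_iff_le_right hp.one_lt).mp this
    omega
  have hnnE : nn = fun _ => p ^ E := funext key
  subst hnnE
  refine ⟨Fintype.card ι, ⟨ψ.trans
    { Equiv.piCongrLeft' (fun _ => ZMod (p ^ E)) (Fintype.equivFin ι) with
      map_add' := fun f g => rfl }⟩, ?_⟩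
  rintro ⟨x, hx⟩
  by_contra h
  haveI : IsEmpty ι := Fintype.card_eq_zero_iff.mp (by omega)
  exact hx (ψ.injective (Subsingleton.elim _ _))


universe u

instance instFunLikeMultAddAut {A : Type*} [AddCommGroup A] :
    FunLike (Multiplicative (AddAut A)) A A := inferInstanceAs (FunLike (AddAut A) A A)

instance instAddMonoidHomClassMultAddAut {A : Type*} [AddCommGroup A] :
    AddMonoidHomClass (Multiplicative (AddAut A)) A A :=
  inferInstanceAs (AddMonoidHomClass (AddAut A) A A)

/-- Restrict a compatible `H`-action to an invariant submodule. -/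
def restrictAut {H : Type*} [Group H] {A : Type u} [AddCommGroup A] (C : Submodule ℤ A)
    (σ : H →* Multiplicative (AddAut A)) (hC : ∀ g : H, ∀ a ∈ C, σ g a ∈ C) : H →* Multiplicative (AddAut ↥C) where
  toFun g := Multiplicative.ofAdd
    { toFun := fun x => ⟨σ g x, hC g x x.2⟩
      invFun := fun x => ⟨σ g⁻¹ x, hC g⁻¹ x x.2⟩
      left_inv := fun x => Subtype.ext <| by
        simp only []
        have : σ g⁻¹ (σ g x) = (σ g⁻¹ * σ g) (x : A) := rfl
        rw [this, ← map_mul, inv_mul_cancel, map_one]; rfl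
      right_inv := fun x => Subtype.ext <| by
        simp only []
        have : σ g (σ g⁻¹ x) = (σ g * σ g⁻¹) (x : A) := rfl
        rw [this, ← map_mul, mul_inv_cancel, map_one]; rfl
      map_add' := fun x y => Subtype.ext <| by
        simp only [Submodule.coe_add]
        exact map_add (σ g) (x : A) (y : A) }
  map_one' := by
    refine AddEquiv.ext fun x => ?_
    simp only [map_one]
    rfl
  map_mul' g h := by
    refine AddEquiv.ext fun x => ?_
    have : σ (g * h) = σ g * σ h := map_mul σ g h
    simp only [this]
    rfl

theorem restrictAut_coe {H : Type*} [Group H] {A : Type u} [AddCommGroup A] (C : Submodule ℤ A)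
    (σ : H →* Multiplicative (AddAut A)) (hC : ∀ g : H, ∀ a ∈ C, σ g a ∈ C) (g : H) (x : ↥C) :
    ((restrictAut C σ hC g x : ↥C) : A) = σ g (x : A) := rfl

theorem main_aux {p : ℕ} (hp : p.Prime) {H : Type*} [Group H] [Finite H]
    (hH : ¬ p ∣ Nat.card H) :
    ∀ (E : ℕ) (A : Type u) [AddCommGroup A] [Finite A] (σ : H →* Multiplicative (AddAut A)),
      (∀ a : A, p ^ E • a = 0) →
      ∃ (m : ℕ) (B : Fin m → Submodule ℤ A),
        (∀ (i : Fin m) (g : H), ∀ a ∈ B i, σ g a ∈ B i) ∧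
        DirectSum.IsInternal B ∧
        (∀ i : Fin m, ∃ (e n : ℕ), 1 ≤ e ∧ 1 ≤ n ∧
          Nonempty (↥(B i) ≃+ (Fin n → ZMod (p ^ e)))) := by
  intro E
  induction E with
  | zero =>
    intro A _ _ σ hA
    have hzero : ∀ a : A, a = 0 := fun a => by simpa using hA a
    refine ⟨0, Fin.elim0, fun i => i.elim0, ?_, fun i => i.elim0⟩
    rw [DirectSum.isInternal_submodule_iff_iSupIndep_and_iSup_eq_top]
    refine ⟨fun i => i.elim0, ?_⟩
    rw [eq_top_iff]
    intro x _
    rw [hzero x]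
    exact zero_mem _
  | succ e IH =>
    intro A _ _ σ hA
    classical
    by_cases hsmall : ∀ a : A, p ^ e • a = 0
    · exact IH A σ hsmall
    push_neg at hsmall
    obtain ⟨a₀, ha₀⟩ := hsmall
    haveI := Fintype.ofFinite H
    -- arithmetic: inverse of |H| mod p^(e+1)
    have hco : Nat.Coprime (Nat.card H) (p ^ (e + 1)) :=
      Nat.Coprime.pow_right _ ((Nat.Prime.coprime_iff_not_dvd hp).mpr hH).symm
    obtain ⟨un, vn, huv⟩ : IsCoprime (Nat.card H : ℤ) ((p : ℤ) ^ (e + 1)) := by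
      rw [← Nat.cast_pow]
      exact Nat.isCoprime_iff_coprime.mpr hco
    have hpow : ∀ a : A, ((p : ℤ) ^ (e + 1)) • a = 0 := by
      intro a
      have := hA a
      rw [← natCast_zsmul] at this
      rwa [show ((p : ℤ) ^ (e + 1)) = ((p ^ (e + 1) : ℕ) : ℤ) by push_cast; ring]
    have huN : ∀ a : A, (un * (Nat.card H : ℤ)) • a = a := by
      intro a
      have h1 : un * (Nat.card H : ℤ) = 1 - vn * (p : ℤ) ^ (e + 1) := by linarith
      rw [h1, sub_smul, one_smul, mul_smul, hpow, smul_zero, sub_zero]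
    -- classification of A, and the reference projection π₀
    obtain ⟨ι, hι, nn, hnn, ⟨ψ0⟩⟩ := AddCommGroup.equiv_directSum_zmod_of_finite' A
    let ψ : A ≃+ (∀ i, ZMod (nn i)) :=
      ψ0.trans { DFinsupp.equivFunOnFintype with map_add' := fun f g => rfl }
    have hdvd : ∀ i, nn i ∣ p ^ (e + 1) := by
      intro i
      haveI : NeZero (nn i) := ⟨by have := hnn i; omega⟩
      have hx : p ^ (e + 1) • (Pi.single i (1 : ZMod (nn i)) : ∀ j, ZMod (nn j)) = 0 := by
        have := hA (ψ.symm (Pi.single i 1))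
        have h' := congrArg ψ this
        rwa [map_nsmul, AddEquiv.apply_symm_apply, map_zero] at h'
      have hx1 : ((p ^ (e + 1) : ℕ) : ZMod (nn i)) = 0 := by
        have := congrFun hx i
        rw [Pi.smul_apply, Pi.single_eq_same, Pi.zero_apply] at this
        rwa [nsmul_eq_mul, mul_one] at this
      exact (ZMod.natCast_eq_zero_iff _ _).mp hx1
    have hsmallcast : ∀ i, nn i ≠ p ^ (e + 1) → ((p ^ e : ℕ) : ZMod (nn i)) = 0 := by
      intro i hne
      haveI : NeZero (nn i) := ⟨by have := hnn i; omega⟩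
      rw [ZMod.natCast_eq_zero_iff]
      obtain ⟨f, hfE, hf⟩ := (Nat.dvd_prime_pow hp).mp (hdvd i)
      have : f ≤ e := by
        rcases Nat.lt_or_ge f (e + 1) with h | h
        · omega
        · exact absurd (hf.trans (by rw [Nat.le_antisymm hfE h])) hne
      rw [hf]
      exact pow_dvd_pow p this
    -- π₀
    let proj : (∀ i, ZMod (nn i)) →+ (∀ i, ZMod (nn i)) :=
      { toFun := fun v i => if nn i = p ^ (e + 1) then v i else 0
        map_zero' := by funext i; simp
        map_add' := fun x y => by
          funext i
          by_cases h : nn i = p ^ (e + 1) <;> simp [h] }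
    let π₀ : Module.End ℤ A :=
      (ψ.symm.toAddMonoidHom.comp (proj.comp ψ.toAddMonoidHom)).toIntLinearMap
    have hπ₀_apply : ∀ a : A, π₀ a = ψ.symm (proj (ψ a)) := fun a => rfl
    -- the target "p^e-divisible" submodule
    set P : Submodule ℤ A := LinearMap.range ((p ^ e : ℕ) • (LinearMap.id : A →ₗ[ℤ] A)) with hP
    have hmemP : ∀ a : A, a ∈ P ↔ ∃ c : A, p ^ e • c = a := by
      intro a
      constructor
      · rintro ⟨c, rfl⟩
        exact ⟨c, rfl⟩
      · rintro ⟨c, rfl⟩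
        exact ⟨c, rfl⟩
    -- Q1
    have hQ1 : ∀ a : A, p ^ e • (a - π₀ a) = 0 := by
      intro a
      rw [hπ₀_apply]
      have : a - ψ.symm (proj (ψ a)) = ψ.symm (ψ a - proj (ψ a)) := by
        rw [map_sub, AddEquiv.symm_apply_apply]
      rw [this, ← map_nsmul]
      convert map_zero ψ.symm
      funext i
      by_cases h : nn i = p ^ (e + 1)
      · simp only [Pi.smul_apply, Pi.sub_apply, proj, AddMonoidHom.coe_mk, ZeroHom.coe_mk, if_pos h,
          sub_self, smul_zero, Pi.zero_apply]
      · simp only [Pi.smul_apply, Pi.sub_apply, proj, AddMonoidHom.coe_mk, ZeroHom.coe_mk,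
          if_neg h, sub_zero, Pi.zero_apply, nsmul_eq_mul, hsmallcast i h, zero_mul]
    -- Q2
    have hQ2 : ∀ a : A, a ∈ P → π₀ a = a := by
      intro a ha
      obtain ⟨c, rfl⟩ := (hmemP a).mp ha
      rw [hπ₀_apply]
      have : ψ (p ^ e • c) = p ^ e • ψ c := map_nsmul ψ (p ^ e) c
      rw [this]
      have hfix : proj (p ^ e • ψ c) = p ^ e • ψ c := by
        funext i
        by_cases h : nn i = p ^ (e + 1)
        · simp only [proj, AddMonoidHom.coe_mk, ZeroHom.coe_mk, if_pos h]
        · simp only [proj, AddMonoidHom.coe_mk, ZeroHom.coe_mk, if_neg h, Pi.smul_apply,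
            nsmul_eq_mul, hsmallcast i h, zero_mul]
      rw [hfix, ← map_nsmul, AddEquiv.symm_apply_apply]
    -- Q3
    have hQ3 : ∀ a : A, p • a = 0 → π₀ a ∈ P := by
      intro a ha
      have hcomp : ∀ i, p • (ψ a) i = 0 := by
        intro i
        have : ψ (p • a) = p • ψ a := map_nsmul ψ p a
        rw [ha, map_zero] at this
        exact (congrFun this.symm i).trans rfl
      have key : ∀ (n : ℕ), n = p ^ (e + 1) → ∀ x : ZMod n, p • x = 0 → ∃ y, p ^ e • y = x := by
        rintro n rfl x hx
        haveI : NeZero (p ^ (e + 1)) := ⟨pow_ne_zero _ hp.ne_zero⟩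
        have hval : ((x.val : ℕ) : ZMod (p ^ (e + 1))) = x := ZMod.natCast_rightInverse x
        have hx' : ((p * x.val : ℕ) : ZMod (p ^ (e + 1))) = 0 := by
          push_cast
          rw [hval] at *
          rw [← nsmul_eq_mul] at *
          exact_mod_cast hx
        have hdvd1 : p ^ (e + 1) ∣ p * x.val := (ZMod.natCast_eq_zero_iff _ _).mp hx'
        have hdvd2 : p ^ e ∣ x.val := by
          have h' : p * p ^ e ∣ p * x.val := by rw [← pow_succ']; exact hdvd1
          exact (Nat.mul_dvd_mul_iff_left hp.pos).mp h'
        obtain ⟨t, ht⟩ := hdvd2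
        refine ⟨(t : ZMod (p ^ (e + 1))), ?_⟩
        rw [nsmul_eq_mul, ← Nat.cast_mul, ← ht, hval]
      have hc : ∀ i, ∃ y : ZMod (nn i), p ^ e • y = proj (ψ a) i := by
        intro i
        by_cases h : nn i = p ^ (e + 1)
        · have := key (nn i) h ((ψ a) i) (hcomp i)
          obtain ⟨y, hy⟩ := this
          exact ⟨y, by simp only [proj, AddMonoidHom.coe_mk, ZeroHom.coe_mk, if_pos h, hy]⟩
        · exact ⟨0, by simp only [proj, AddMonoidHom.coe_mk, ZeroHom.coe_mk, if_neg h, smul_zero]⟩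
      choose w hw using hc
      refine (hmemP _).mpr ⟨ψ.symm w, ?_⟩
      rw [hπ₀_apply, ← map_nsmul]
      congr 1
      funext i
      exact hw i
    -- group action facts
    have hmulσ : ∀ (g₁ g₂ : H) (x : A), σ (g₁ * g₂) x = σ g₁ (σ g₂ x) := by
      intro g₁ g₂ x
      rw [map_mul]
      rfl
    have hgg : ∀ (g : H) (a : A), σ g (σ g⁻¹ a) = a := by
      intro g a
      rw [← hmulσ, mul_inv_cancel, map_one]
      rfl
    have hσP : ∀ (g : H), ∀ a ∈ P, σ g a ∈ P := by
      intro g a ha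
      obtain ⟨c, rfl⟩ := (hmemP a).mp ha
      exact (hmemP _).mpr ⟨σ g c, (map_nsmul (σ g) (p ^ e) c).symm⟩
    -- averaged endomorphism
    let L : H → Module.End ℤ A := fun g =>
      (AddMonoidHom.toIntLinearMap (Multiplicative.toAdd (σ g)).toAddMonoidHom) ∘ₗ π₀ ∘ₗ
        (AddMonoidHom.toIntLinearMap (Multiplicative.toAdd (σ g⁻¹)).toAddMonoidHom)
    have hL_apply : ∀ (g : H) (a : A), L g a = σ g (π₀ (σ g⁻¹ a)) := fun _ _ => rfl
    have hL1 : ∀ (g : H) (a : A), p ^ e • (a - L g a) = 0 := by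
      intro g a
      have h0 := congrArg (σ g) (hQ1 (σ g⁻¹ a))
      rw [map_nsmul, map_sub, hgg, map_zero] at h0
      rw [hL_apply]
      exact h0
    have hL2 : ∀ (g : H), ∀ a ∈ P, L g a = a := by
      intro g a ha
      rw [hL_apply, hQ2 _ (hσP g⁻¹ a ha), hgg]
    have hL3 : ∀ (g : H) (a : A), p • a = 0 → L g a ∈ P := by
      intro g a ha
      rw [hL_apply]
      refine hσP g _ (hQ3 _ ?_)
      rw [← map_nsmul (Multiplicative.toAdd (σ g⁻¹)) p a, ha, map_zero]
    let s : Module.End ℤ A := ∑ g : H, L g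
    let π : Module.End ℤ A := un • s
    have hs_apply : ∀ a : A, s a = ∑ g : H, L g a := by
      intro a
      simp [s, LinearMap.sum_apply]
    have hπ_apply : ∀ a : A, π a = un • s a := fun _ => rfl
    have hNsmul : ∀ a : A, un • ((Nat.card H) • a) = a := by
      intro a
      rw [← natCast_zsmul, smul_smul]
      exact huN a
    have hπ1 : ∀ a : A, p ^ e • (a - π a) = 0 := by
      intro a
      have hNs : p ^ e • ((Nat.card H) • a - s a) = 0 := by
        rw [hs_apply]
        have h1 : (Nat.card H) • a - ∑ g : H, L g a = ∑ g : H, (a - L g a) := by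
          rw [Finset.sum_sub_distrib, Finset.sum_const, Finset.card_univ,
            Nat.card_eq_fintype_card]
        rw [h1, Finset.smul_sum]
        exact Finset.sum_eq_zero fun g _ => hL1 g a
      have h2 : a - π a = un • ((Nat.card H) • a - s a) := by
        rw [smul_sub, hNsmul, hπ_apply]
      rw [h2, ← natCast_zsmul, smul_comm ((p ^ e : ℕ) : ℤ) un, natCast_zsmul, hNs, smul_zero]
    have hπ2 : ∀ a ∈ P, π a = a := by
      intro a ha
      rw [hπ_apply, hs_apply]
      have h1 : ∑ g : H, L g a = (Nat.card H) • a := by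
        rw [Finset.sum_congr rfl fun g _ => hL2 g a ha, Finset.sum_const, Finset.card_univ,
          Nat.card_eq_fintype_card]
      rw [h1, hNsmul]
    have hπ3 : ∀ a : A, p • a = 0 → π a ∈ P := by
      intro a ha
      rw [hπ_apply, hs_apply]
      exact Submodule.smul_mem _ un (Submodule.sum_mem _ fun g _ => hL3 g a ha)
    have hπ4 : ∀ (g : H) (a : A), π (σ g a) = σ g (π a) := by
      intro g a
      have hsum : ∑ g' : H, L g' (σ g a) = σ g (∑ g' : H, L g' a) := by
        rw [map_sum]
        refine (Fintype.sum_equiv (Equiv.mulLeft g) _ _ fun h => ?_).symm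
        show σ g (L h a) = L (g * h) (σ g a)
        rw [hL_apply, hL_apply, mul_inv_rev, hmulσ g h, hmulσ h⁻¹ g⁻¹]
        have : σ g⁻¹ (σ g a) = a := by rw [← hmulσ, inv_mul_cancel, map_one]; rfl
        rw [this]
      rw [hπ_apply, hπ_apply, hs_apply, hs_apply, hsum, map_zsmul]
    -- idempotent power
    haveI : Finite (Module.End ℤ A) :=
      Finite.of_injective (fun f => (f : A → A)) DFunLike.coe_injective
    obtain ⟨k, hk1, hkidem⟩ := exists_idem_pow π
    set ε : Module.End ℤ A := π ^ k with hεdef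
    have hpow_apply : ∀ (j : ℕ) (a : A), (π ^ (j + 1)) a = (π ^ j) (π a) := by
      intro j a
      rw [pow_succ]
      rfl
    have hfixP : ∀ (j : ℕ), ∀ a ∈ P, (π ^ j) a = a := by
      intro j
      induction j with
      | zero => intro a _; rfl
      | succ j ihj =>
        intro a ha
        rw [hpow_apply, hπ2 a ha, ihj a ha]
    have hε1 : ∀ a : A, p ^ e • (a - ε a) = 0 := by
      have hgen : ∀ (j : ℕ) (a : A), p ^ e • (a - (π ^ j) a) = 0 := by
        intro j
        induction j with
        | zero => intro a; simp
        | succ j ihj =>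
          intro a
          rw [hpow_apply]
          have h1 : a - (π ^ j) (π a) = (a - π a) + (π a - (π ^ j) (π a)) := by abel
          rw [h1, smul_add, hπ1 a, ihj (π a), add_zero]
      exact hgen k
    have hε2 : ∀ a ∈ P, ε a = a := hfixP k
    have hε3 : ∀ a : A, p • a = 0 → ε a ∈ P := by
      intro a ha
      obtain ⟨k', rfl⟩ : ∃ k', k = k' + 1 := ⟨k - 1, by omega⟩
      rw [hεdef, hpow_apply]
      have hmem : π a ∈ P := hπ3 a ha
      rw [hfixP k' _ hmem]
      exact hmem
    have hε4 : ∀ (g : H) (a : A), ε (σ g a) = σ g (ε a) := by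
      have hgen : ∀ (j : ℕ) (g : H) (a : A), (π ^ j) (σ g a) = σ g ((π ^ j) a) := by
        intro j
        induction j with
        | zero => intro g a; rfl
        | succ j ihj =>
          intro g a
          rw [hpow_apply, hpow_apply, hπ4, ihj]
      exact hgen k
    -- range and kernel
    set Bv : Submodule ℤ A := LinearMap.range ε with hBv
    set Cv : Submodule ℤ A := LinearMap.ker ε with hCv
    have hεfix : ∀ a ∈ Bv, ε a = a := by
      rintro a ⟨b, rfl⟩
      rw [← Module.End.mul_apply, hkidem]
    have hdisj : Disjoint Bv Cv := by
      rw [Submodule.disjoint_def]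
      intro x hxB hxC
      rw [← hεfix x hxB]
      exact LinearMap.mem_ker.mp hxC
    have hsup : Bv ⊔ Cv = ⊤ := by
      rw [eq_top_iff]
      intro a _
      have hdecomp : a = ε a + (a - ε a) := by abel
      rw [hdecomp]
      refine Submodule.add_mem_sup ⟨a, rfl⟩ ?_
      rw [LinearMap.mem_ker, map_sub, hεfix (ε a) ⟨a, rfl⟩, sub_self]
    have hCexp : ∀ c : ↥Cv, p ^ e • c = 0 := by
      intro c
      apply Subtype.ext
      have h1 : ((p ^ e • c : ↥Cv) : A) = p ^ e • (c : A) := rfl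
      rw [h1]
      have h2 : ε (c : A) = 0 := LinearMap.mem_ker.mp c.2
      have := hε1 (c : A)
      rw [h2, sub_zero] at this
      exact this
    have hBinv : ∀ (g : H), ∀ a ∈ Bv, σ g a ∈ Bv := by
      rintro g a ⟨b, rfl⟩
      exact ⟨σ g b, hε4 g b⟩
    have hCinv : ∀ (g : H), ∀ a ∈ Cv, σ g a ∈ Cv := by
      intro g a ha
      rw [hCv, LinearMap.mem_ker, hε4, LinearMap.mem_ker.mp ha, map_zero]
    -- recurse on Cv
    obtain ⟨m', B', hinv', hint', hhomo'⟩ := IH ↥Cv (restrictAut Cv σ hCinv) hCexp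
    refine ⟨m' + 1, Fin.cons Bv (fun i => (B' i).map Cv.subtype), ?_, ?_, ?_⟩
    · -- invariance
      intro i g
      refine Fin.cases ?_ ?_ i
      · simpa only [Fin.cons_zero] using hBinv g
      · intro j
        simp only [Fin.cons_succ]
        rintro a ⟨x, hx, rfl⟩
        exact ⟨restrictAut Cv σ hCinv g x, hinv' j g x hx, (restrictAut_coe Cv σ hCinv g x).symm ▸ rfl⟩
    · -- internality
      rw [DirectSum.isInternal_submodule_iff_iSupIndep_and_iSup_eq_top]
      obtain ⟨hind', htop'⟩ :=
        (DirectSum.isInternal_submodule_iff_iSupIndep_and_iSup_eq_top _).mp hint'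
      constructor
      · intro i
        refine Fin.cases ?_ ?_ i
        · simp only [Fin.cons_zero]
          refine Disjoint.mono_right ?_ hdisj
          refine iSup_le fun j => iSup_le fun hj => ?_
          obtain ⟨l, rfl⟩ := Fin.eq_succ_of_ne_zero hj
          simp only [Fin.cons_succ]
          exact Submodule.map_subtype_le _ _
        · intro l
          simp only [Fin.cons_succ]
          have hXC : (B' l).map Cv.subtype ≤ Cv := Submodule.map_subtype_le _ _
          set Sv := (⨆ j, ⨆ (_ : j ≠ l), B' j).map Cv.subtype with hSv
          have hSC : Sv ≤ Cv := Submodule.map_subtype_le _ _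
          have hXS : Disjoint ((B' l).map Cv.subtype) Sv := by
            rw [disjoint_iff, hSv, ← Submodule.map_inf _ (Submodule.injective_subtype Cv),
              disjoint_iff.mp (hind' l), Submodule.map_bot]
          have hmain : Disjoint ((B' l).map Cv.subtype) (Bv ⊔ Sv) := by
            rw [disjoint_iff]
            have h1 : (Bv ⊔ Sv) ⊓ Cv = Sv := by
              rw [sup_comm Bv Sv, sup_inf_assoc_of_le Bv hSC, disjoint_iff.mp hdisj, sup_bot_eq]
            calc (B' l).map Cv.subtype ⊓ (Bv ⊔ Sv)
                = (B' l).map Cv.subtype ⊓ Cv ⊓ (Bv ⊔ Sv) := by rw [inf_eq_left.mpr hXC]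
              _ = (B' l).map Cv.subtype ⊓ ((Bv ⊔ Sv) ⊓ Cv) := by
                  rw [inf_assoc, inf_comm Cv (Bv ⊔ Sv)]
              _ = (B' l).map Cv.subtype ⊓ Sv := by rw [h1]
              _ = ⊥ := disjoint_iff.mp hXS
          refine hmain.mono_right ?_
          refine iSup_le fun j => iSup_le fun hj => ?_
          revert hj
          refine Fin.cases ?_ ?_ j
          · intro _
            simp only [Fin.cons_zero]
            exact le_sup_left
          · intro j' hj'
            simp only [Fin.cons_succ]
            have hne : j' ≠ l := fun h => hj' (by rw [h])
            refine le_sup_of_le_right ?_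
            rw [hSv]
            exact Submodule.map_mono
              (le_iSup_of_le j' (le_iSup_of_le hne le_rfl))
      · rw [eq_top_iff, ← hsup]
        refine sup_le ?_ ?_
        · exact le_iSup_of_le 0 le_rfl
        · have h1 : Cv = (⨆ j, B' j).map Cv.subtype := by
            rw [htop', Submodule.map_top, Submodule.range_subtype]
          calc Cv = (⨆ j, B' j).map Cv.subtype := h1
            _ = ⨆ j, (B' j).map Cv.subtype := Submodule.map_iSup Cv.subtype B'
            _ ≤ _ := iSup_le fun j => le_iSup_of_le j.succ le_rfl
    · -- homocyclic pieces
      intro i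
      refine Fin.cases ?_ ?_ i
      · have h1 : ∀ x : ↥Bv, p ^ (e + 1) • x = 0 := by
          intro x
          apply Subtype.ext
          have hcoe : ((p ^ (e + 1) • x : ↥Bv) : A) = p ^ (e + 1) • (x : A) := rfl
          rw [hcoe, hA]
          rfl
        have h2 : ∀ x : ↥Bv, p • x = 0 → ∃ y : ↥Bv, p ^ ((e + 1) - 1) • y = x := by
          intro x hx
          have hx' : p • (x : A) = 0 := by
            have : ((p • x : ↥Bv) : A) = p • (x : A) := rfl
            rw [← this, hx]
            rfl
          have hmem : ε (x : A) ∈ P := hε3 _ hx'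
          rw [hεfix _ x.2] at hmem
          obtain ⟨c, hc⟩ := (hmemP _).mp hmem
          refine ⟨⟨ε c, ⟨c, rfl⟩⟩, ?_⟩
          apply Subtype.ext
          have hcoe : ((p ^ ((e + 1) - 1) • (⟨ε c, ⟨c, rfl⟩⟩ : ↥Bv) : ↥Bv) : A)
              = p ^ e • (ε c) := rfl
          rw [hcoe, ← map_nsmul ε (p ^ e) c, hc, hεfix _ x.2]
        have h3 : ∃ x : ↥Bv, x ≠ 0 := by
          refine ⟨⟨ε (p ^ e • a₀), ⟨p ^ e • a₀, rfl⟩⟩, fun h0 => ha₀ ?_⟩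
          have h0' : ε (p ^ e • a₀) = 0 := congrArg Subtype.val h0
          have h1' := hε1 a₀
          rw [smul_sub, sub_eq_zero] at h1'
          rw [h1', ← map_nsmul ε (p ^ e) a₀, h0']
        obtain ⟨n, ⟨iso⟩, hn⟩ := homocyclic_of_socle hp (by omega) ↥Bv h1 h2
        exact ⟨e + 1, n, by omega, hn h3, ⟨iso⟩⟩
      · intro j
        obtain ⟨e', n', he', hn', ⟨iso⟩⟩ := hhomo' j
        exact ⟨e', n', he', hn',
          ⟨((Submodule.equivMapOfInjective Cv.subtype (Submodule.injective_subtype Cv)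
            (B' j)).symm.toAddEquiv).trans iso⟩⟩

/-- **Equivariant primary splitting** (used in the proof of Remark B.6 of the paper).
Let `p` be a prime and `A` a finite abelian `p`-group with an action of a finite group `H`
by group automorphisms, where `p ∤ |H|`.  Then `A` is the internal direct sum of finitely
many `H`-invariant subgroups, each of which is homocyclic, i.e. isomorphic as an abstract
abelian group to `(ℤ/p^eℤ)^n` with `e ≥ 1` and `n ≥ 1`. -/
theorem stmt_3 {p : ℕ} (hp : p.Prime) {A : Type*} [AddCommGroup A] [Finite A]
    (hA : ∀ a : A, ∃ m : ℕ, (p : ℤ) ^ m • a = 0)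
    {H : Type*} [Group H] [Finite H] (hH : ¬ p ∣ Nat.card H)
    (σ : H →* Multiplicative (AddAut A)) :
    ∃ (m : ℕ) (B : Fin m → Submodule ℤ A),
      (∀ (i : Fin m) (g : H), ∀ a ∈ B i, (Multiplicative.toAdd (σ g)) a ∈ B i) ∧
      DirectSum.IsInternal B ∧
      (∀ i : Fin m, ∃ (e n : ℕ), 1 ≤ e ∧ 1 ≤ n ∧
        Nonempty (↥(B i) ≃+ (Fin n → ZMod (p ^ e)))) := by
  classical
  haveI := Fintype.ofFinite A
  choose f hf using hA
  set E := Finset.univ.sup f with hE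
  have hAE : ∀ a : A, p ^ E • a = 0 := by
    intro a
    have h1 : f a ≤ E := Finset.le_sup (Finset.mem_univ a)
    have h2 : p ^ (f a) • a = 0 := by
      have := hf a
      rwa [show ((p : ℤ) ^ (f a)) = ((p ^ (f a) : ℕ) : ℤ) by push_cast; ring,
        natCast_zsmul] at this
    calc p ^ E • a = (p ^ (E - f a) * p ^ (f a)) • a := by
          rw [← pow_add, show E - f a + f a = E from by omega]
      _ = p ^ (E - f a) • (p ^ (f a) • a) := mul_smul _ _ _
      _ = 0 := by rw [h2, smul_zero]
  exact main_aux hp hH E A σ hAE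
end

section
/- Let A be an abelian group written additively, let ℤ[A] denote its group algebra over ℤ with canonical basis {x^α}_{α ∈ A} (so x^{α+β} = x^α·x^β and x^0 = 1), and let ε : ℤ[A] → ℤ be the augmentation homomorphism sending each x^α to 1. Then the map θ_A : A → ℤ ⊗_{ℤ[A]} Ω_{ℤ[A]/ℤ} (the base change of the module of Kähler differentials of ℤ[A] over ℤ along ε) defined by α ↦ 1 ⊗ d(x^α) is an isomorphism of abelian groups. Moreover, θ is natural in A: for every group homomorphism φ : A → B, one has θ_B ∘ φ = Θ(φ) ∘ θ_A, where Θ(φ) : ℤ ⊗_{ℤ[A]} Ω_{ℤ[A]/ℤ} → ℤ ⊗_{ℤ[B]} Ω_{ℤ[B]/ℤ} is the map induced by x^α ↦ x^{φ(α)}. -/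
open TensorProduct

set_option synthInstance.maxHeartbeats 1000000
set_option maxHeartbeats 1000000

attribute [-instance] Finsupp.instMul Finsupp.instMulZeroClass
  Finsupp.instSemigroupWithZero Finsupp.instNonUnitalNonAssocSemiring
  Finsupp.instNonUnitalSemiring Finsupp.instNonUnitalCommSemiring
  Finsupp.instNonUnitalNonAssocRing Finsupp.instNonUnitalRing
  Finsupp.instNonUnitalCommRing

noncomputable section

universe u

/-- The augmentation map `ℤ[A] → ℤ`, `x^α ↦ 1`, of the group ring of an abelian group. -/
def aug (A : Type*) [AddCommGroup A] : AddMonoidAlgebra ℤ A →ₐ[ℤ] ℤ :=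
  AddMonoidAlgebra.lift ℤ ℤ A 1

/-- `ℤ` as a module over the group ring `ℤ[A]`, via the augmentation map. -/
noncomputable instance augModule (A : Type*) [AddCommGroup A] :
    Module (AddMonoidAlgebra ℤ A) ℤ :=
  Module.compHom ℤ (aug A).toRingHom

/-- The map `θ_A : A → ℤ ⊗_{ℤ[A]} Ω_{ℤ[A]/ℤ}`, `α ↦ 1 ⊗ d(x^α)`, where the base change is
taken along the augmentation `ε : ℤ[A] → ℤ`, `x^α ↦ 1`. -/
def theta (A : Type u) [AddCommGroup A] :
    A → TensorProduct (AddMonoidAlgebra ℤ A) ℤ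
          (KaehlerDifferential ℤ (AddMonoidAlgebra ℤ A)) :=
  fun α => (1 : ℤ) ⊗ₜ[AddMonoidAlgebra ℤ A]
    (KaehlerDifferential.D ℤ (AddMonoidAlgebra ℤ A) (AddMonoidAlgebra.of' ℤ A α))

variable {A : Type u} [AddCommGroup A]

lemma aug_single (a : A) (n : ℤ) : aug A (AddMonoidAlgebra.single a n) = n := by
  simpa [aug] using AddMonoidAlgebra.lift_single (R := ℤ) (M := A) 1 a n

lemma aug_smul_int (r : AddMonoidAlgebra ℤ A) (n : ℤ) : r • n = aug A r * n := rfl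

def T : AddMonoidAlgebra ℤ A →ₗ[ℤ] A :=
  Finsupp.linearCombination ℤ id ∘ₗ (AddMonoidAlgebra.coeffLinearEquiv ℤ).toLinearMap

lemma T_single (a : A) (n : ℤ) : T (AddMonoidAlgebra.single a n) = n • a := by
  show Finsupp.linearCombination ℤ (id : A → A) (Finsupp.single a n) = n • a
  simp

lemma T_mul_single (a : A) (m : ℤ) (g : AddMonoidAlgebra ℤ A) :
    T (AddMonoidAlgebra.single a m * g)
      = aug A (AddMonoidAlgebra.single a m) • T g
        + aug A g • T (AddMonoidAlgebra.single a m) := by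
  induction g using AddMonoidAlgebra.induction_linear with
  | zero => simp
  | add g1 g2 h1 h2 =>
      rw [mul_add, map_add, map_add, h1, h2, map_add, add_smul, smul_add]
      abel
  | single b k =>
      show T (AddMonoidAlgebra.single a m * AddMonoidAlgebra.single b k)
        = aug A (AddMonoidAlgebra.single a m) • T (AddMonoidAlgebra.single b k)
          + aug A (AddMonoidAlgebra.single b k) • T (AddMonoidAlgebra.single a m)
      rw [AddMonoidAlgebra.single_mul_single, T_single, T_single, T_single,
        aug_single, aug_single, smul_add, mul_smul, mul_smul, smul_comm k m a]
      abel

lemma T_mul (f g : AddMonoidAlgebra ℤ A) :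
    T (f * g) = aug A f • T g + aug A g • T f := by
  induction f using AddMonoidAlgebra.induction_linear with
  | zero => simp
  | add f1 f2 h1 h2 =>
      rw [add_mul, map_add, map_add, h1, h2, map_add, add_smul, smul_add]
      abel
  | single a m => exact T_mul_single a m g

variable (A) in
noncomputable instance augModuleA : Module (AddMonoidAlgebra ℤ A) A :=
  Module.compHom A (aug A).toRingHom

lemma smul_A (r : AddMonoidAlgebra ℤ A) (a : A) : r • a = aug A r • a := rfl

instance : IsScalarTower ℤ (AddMonoidAlgebra ℤ A) A := by
  constructor
  intro n r a
  rw [smul_A, smul_A, map_smul, smul_assoc]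

variable (A) in
noncomputable def dA : Derivation ℤ (AddMonoidAlgebra ℤ A) A where
  toLinearMap := T
  map_one_eq_zero' := by
    show T (AddMonoidAlgebra.single (0 : A) (1 : ℤ)) = 0
    rw [T_single, one_smul]
  leibniz' := fun f g => by
    show T (f * g) = _ + _
    rw [T_mul, smul_A, smul_A]

variable (A) in
noncomputable def psi :
    TensorProduct (AddMonoidAlgebra ℤ A) ℤ
      (KaehlerDifferential ℤ (AddMonoidAlgebra ℤ A)) →+ A :=
  TensorProduct.liftAddHom
    { toFun := fun n => n • ((dA A).liftKaehlerDifferential).toAddMonoidHom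
      map_zero' := zero_smul _ _
      map_add' := fun m n => add_smul m n _ }
    (by
      intro r n ω
      show (r • n) • (dA A).liftKaehlerDifferential ω
        = n • (dA A).liftKaehlerDifferential (r • ω)
      rw [map_smul, aug_smul_int, smul_A, mul_smul, smul_comm])

lemma theta_add (α β : A) : theta A (α + β) = theta A α + theta A β := by
  have h : AddMonoidAlgebra.of' ℤ A (α + β)
      = AddMonoidAlgebra.of' ℤ A α * AddMonoidAlgebra.of' ℤ A β := by
    rw [show (AddMonoidAlgebra.of' ℤ A α * AddMonoidAlgebra.of' ℤ A β)
        = AddMonoidAlgebra.single (α + β) ((1:ℤ) * 1) from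
      AddMonoidAlgebra.single_mul_single .., one_mul]
    rfl
  have e : ∀ γ : A, (AddMonoidAlgebra.of' ℤ A γ • (1:ℤ)) = 1 := fun γ => by
    rw [aug_smul_int, show aug A (AddMonoidAlgebra.of' ℤ A γ) = 1 from aug_single γ 1, mul_one]
  rw [theta, h, Derivation.leibniz, TensorProduct.tmul_add,
    ← TensorProduct.smul_tmul, ← TensorProduct.smul_tmul, e, e]
  rw [add_comm]
  rfl

lemma theta_zero : theta A 0 = 0 := by
  have : (AddMonoidAlgebra.of' ℤ A 0) = 1 := rfl
  rw [theta, this, Derivation.map_one_eq_zero, TensorProduct.tmul_zero]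

variable (A) in
noncomputable def thetaHom : A →+ TensorProduct (AddMonoidAlgebra ℤ A) ℤ
    (KaehlerDifferential ℤ (AddMonoidAlgebra ℤ A)) :=
  { toFun := theta A, map_zero' := theta_zero, map_add' := theta_add }

lemma psi_theta (α : A) : psi A (theta A α) = α := by
  rw [theta]
  show (1:ℤ) • (dA A).liftKaehlerDifferential
    (KaehlerDifferential.D ℤ (AddMonoidAlgebra ℤ A) (AddMonoidAlgebra.of' ℤ A α)) = α
  rw [one_smul, Derivation.liftKaehlerDifferential_comp_D]
  show T (AddMonoidAlgebra.single α (1:ℤ)) = α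
  rw [T_single, one_smul]

lemma smul_one_tmul (n : ℤ) (ω : KaehlerDifferential ℤ (AddMonoidAlgebra ℤ A)) :
    n • ((1:ℤ) ⊗ₜ[AddMonoidAlgebra ℤ A] ω)
      = n ⊗ₜ[AddMonoidAlgebra ℤ A] ω := by
  have := map_zsmul (((TensorProduct.mk (AddMonoidAlgebra ℤ A) ℤ
    (KaehlerDifferential ℤ (AddMonoidAlgebra ℤ A))).flip ω).toAddMonoidHom) n 1
  simp only [LinearMap.toAddMonoidHom_coe, LinearMap.flip_apply, TensorProduct.mk_apply,
    smul_eq_mul, mul_one] at this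
  rw [← this]

lemma theta_zsmul (m : ℤ) (a : A) : theta A (m • a) = m • theta A a :=
  map_zsmul (thetaHom A) m a

lemma theta_T (f : AddMonoidAlgebra ℤ A) :
    theta A (T f) = (1:ℤ) ⊗ₜ[AddMonoidAlgebra ℤ A]
      (KaehlerDifferential.D ℤ (AddMonoidAlgebra ℤ A) f) := by
  induction f using AddMonoidAlgebra.induction_linear with
  | zero => rw [map_zero, theta_zero, map_zero, TensorProduct.tmul_zero]
  | add f g hf hg => rw [map_add, theta_add, hf, hg, map_add, TensorProduct.tmul_add]
  | single a m =>
      show theta A (T (AddMonoidAlgebra.single a m)) = _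
      rw [T_single, theta_zsmul m a]
      have h2 : (AddMonoidAlgebra.single a m : AddMonoidAlgebra ℤ A)
          = m • AddMonoidAlgebra.of' ℤ A a := by
        rw [AddMonoidAlgebra.of'_apply]
        show AddMonoidAlgebra.single a m = m • AddMonoidAlgebra.single a (1:ℤ)
        rw [AddMonoidAlgebra.smul_single, smul_eq_mul, mul_one]
      rw [h2]
      have h3 : KaehlerDifferential.D ℤ (AddMonoidAlgebra ℤ A)
            (m • AddMonoidAlgebra.of' ℤ A a)
          = m • KaehlerDifferential.D ℤ (AddMonoidAlgebra ℤ A)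
            (AddMonoidAlgebra.of' ℤ A a) :=
        map_zsmul ((KaehlerDifferential.D ℤ (AddMonoidAlgebra ℤ A)).toLinearMap.toAddMonoidHom) m _
      rw [h3]
      have h4 := map_zsmul ((TensorProduct.mk (AddMonoidAlgebra ℤ A) ℤ
        (KaehlerDifferential ℤ (AddMonoidAlgebra ℤ A)) (1:ℤ)).toAddMonoidHom) m
        (KaehlerDifferential.D ℤ (AddMonoidAlgebra ℤ A) (AddMonoidAlgebra.of' ℤ A a))
      simp only [LinearMap.toAddMonoidHom_coe, TensorProduct.mk_apply] at h4
      rw [h4]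
      rfl

lemma theta_psi (z : TensorProduct (AddMonoidAlgebra ℤ A) ℤ
    (KaehlerDifferential ℤ (AddMonoidAlgebra ℤ A))) :
    theta A (psi A z) = z := by
  have key : ∀ ω : KaehlerDifferential ℤ (AddMonoidAlgebra ℤ A), ∀ n : ℤ,
      theta A (psi A (n ⊗ₜ[AddMonoidAlgebra ℤ A] ω)) = n ⊗ₜ[AddMonoidAlgebra ℤ A] ω := by
    intro ω
    have hω : ω ∈ Submodule.span (AddMonoidAlgebra ℤ A)
        (Set.range (KaehlerDifferential.D ℤ (AddMonoidAlgebra ℤ A))) := by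
      rw [KaehlerDifferential.span_range_derivation]; trivial
    refine Submodule.span_induction
      (p := fun ω _ => ∀ n : ℤ,
        theta A (psi A (n ⊗ₜ[AddMonoidAlgebra ℤ A] ω)) = n ⊗ₜ[AddMonoidAlgebra ℤ A] ω)
      ?_ ?_ ?_ ?_ hω
    · rintro _ ⟨f, rfl⟩ n
      have h1 : psi A (n ⊗ₜ[AddMonoidAlgebra ℤ A]
          (KaehlerDifferential.D ℤ (AddMonoidAlgebra ℤ A) f))
          = n • (dA A).liftKaehlerDifferential
              (KaehlerDifferential.D ℤ (AddMonoidAlgebra ℤ A) f) := rfl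
      rw [h1, Derivation.liftKaehlerDifferential_comp_D]
      have h2 : (dA A) f = T f := rfl
      rw [h2, theta_zsmul n (T f), theta_T, smul_one_tmul]
    · intro n
      rw [TensorProduct.tmul_zero, map_zero, theta_zero]
    · intro x y hx hy ihx ihy n
      rw [TensorProduct.tmul_add, map_add, theta_add, ihx, ihy]
    · intro r x hx ih n
      rw [show (n ⊗ₜ[AddMonoidAlgebra ℤ A] (r • x)) = (r • n) ⊗ₜ[AddMonoidAlgebra ℤ A] x from
        (TensorProduct.smul_tmul r n x).symm]
      exact ih (r • n)
  induction z using TensorProduct.induction_on with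
  | zero => rw [map_zero, theta_zero]
  | tmul n ω => exact key ω n
  | add x y hx hy => rw [map_add, theta_add, hx, hy]

lemma theta_bij : Function.Bijective (theta A) := by
  constructor
  · intro a b h
    have := congrArg (psi A) h
    rwa [psi_theta, psi_theta] at this
  · intro z
    exact ⟨psi A z, theta_psi z⟩

/-- **Key computation in the proof of Proposition B.2** (prop-cotang-mult-type).  For an
abelian group `A`, the map `θ_A : A → ℤ ⊗_{ℤ[A]} Ω_{ℤ[A]/ℤ}`, `α ↦ 1 ⊗ d(x^α)`, is an
isomorphism of abelian groups, naturally in `A`: for every homomorphism `φ : A →+ B` the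
map `Θ(φ)` induced by `x^α ↦ x^{φ(α)}` satisfies `Θ(φ) ∘ θ_A = θ_B ∘ φ`. -/
theorem stmt_8 (A : Type u) [AddCommGroup A] :
    (∀ α β : A, theta A (α + β) = theta A α + theta A β) ∧
    Function.Bijective (theta A) ∧
    (∀ (B : Type u) [AddCommGroup B] (φ : A →+ B),
      ∃ Θ : TensorProduct (AddMonoidAlgebra ℤ A) ℤ
              (KaehlerDifferential ℤ (AddMonoidAlgebra ℤ A)) →+
            TensorProduct (AddMonoidAlgebra ℤ B) ℤ
              (KaehlerDifferential ℤ (AddMonoidAlgebra ℤ B)),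
        -- `Θ` is induced by the ring homomorphism `ℤ[A] → ℤ[B]`, `x^α ↦ x^{φ(α)}`
        (∀ (n : ℤ) (f : AddMonoidAlgebra ℤ A),
          Θ (n ⊗ₜ[AddMonoidAlgebra ℤ A] (KaehlerDifferential.D ℤ (AddMonoidAlgebra ℤ A) f))
            = n ⊗ₜ[AddMonoidAlgebra ℤ B] (KaehlerDifferential.D ℤ (AddMonoidAlgebra ℤ B)
                (AddMonoidAlgebra.mapDomainRingHom ℤ φ f))) ∧
        -- naturality: `Θ(φ) ∘ θ_A = θ_B ∘ φ`
        (∀ α : A, Θ (theta A α) = theta B (φ α))) := by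
  refine ⟨theta_add, theta_bij, ?_⟩
  intro B _ φ
  set ρ : AddMonoidAlgebra ℤ A →+* AddMonoidAlgebra ℤ B :=
    AddMonoidAlgebra.mapDomainRingHom ℤ φ with hρ
  have rho_single : ∀ (a : A) (m : ℤ),
      ρ (AddMonoidAlgebra.single a m) = AddMonoidAlgebra.single (φ a) m := by
    intro a m
    show AddMonoidAlgebra.mapDomain φ (AddMonoidAlgebra.single a m) = _
    rw [AddMonoidAlgebra.mapDomain_single]
  have aug_rho : ∀ f, aug B (ρ f) = aug A f := by
    intro f
    induction f using AddMonoidAlgebra.induction_linear with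
    | zero => simp
    | add f g hf hg => rw [map_add, map_add, hf, hg, map_add]
    | single a m =>
        rw [rho_single,
          show aug B (AddMonoidAlgebra.single (φ a) m) = m from aug_single (φ a) m,
          show aug A (AddMonoidAlgebra.single a m) = m from aug_single a m]
  letI modB : Module (AddMonoidAlgebra ℤ A)
      (KaehlerDifferential ℤ (AddMonoidAlgebra ℤ B)) := Module.compHom _ ρ
  have smul_B : ∀ (r : AddMonoidAlgebra ℤ A)
      (x : KaehlerDifferential ℤ (AddMonoidAlgebra ℤ B)), r • x = ρ r • x := fun _ _ => rfl
  letI : IsScalarTower ℤ (AddMonoidAlgebra ℤ A)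
      (KaehlerDifferential ℤ (AddMonoidAlgebra ℤ B)) := by
    constructor
    intro n r x
    rw [smul_B, smul_B, map_zsmul ρ n r, smul_assoc]
  letI dB : Derivation ℤ (AddMonoidAlgebra ℤ A)
      (KaehlerDifferential ℤ (AddMonoidAlgebra ℤ B)) :=
    { toFun := fun f => KaehlerDifferential.D ℤ (AddMonoidAlgebra ℤ B) (ρ f)
      map_add' := fun f g => by
        show KaehlerDifferential.D ℤ (AddMonoidAlgebra ℤ B) (ρ (f + g))
          = KaehlerDifferential.D ℤ (AddMonoidAlgebra ℤ B) (ρ f)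
            + KaehlerDifferential.D ℤ (AddMonoidAlgebra ℤ B) (ρ g)
        rw [map_add, map_add]
      map_smul' := fun n f => by
        show KaehlerDifferential.D ℤ (AddMonoidAlgebra ℤ B) (ρ (n • f))
          = n • KaehlerDifferential.D ℤ (AddMonoidAlgebra ℤ B) (ρ f)
        rw [map_zsmul ρ n f]
        exact map_zsmul ((KaehlerDifferential.D ℤ
          (AddMonoidAlgebra ℤ B)).toLinearMap.toAddMonoidHom) n (ρ f)
      map_one_eq_zero' := by
        show KaehlerDifferential.D ℤ (AddMonoidAlgebra ℤ B) (ρ 1) = 0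
        rw [map_one, Derivation.map_one_eq_zero]
      leibniz' := fun f g => by
        show KaehlerDifferential.D ℤ (AddMonoidAlgebra ℤ B) (ρ (f * g)) = _
        rw [map_mul, Derivation.leibniz, smul_B f, smul_B g]
        rfl }
  letI L2 := dB.liftKaehlerDifferential
  refine ⟨TensorProduct.liftAddHom
    (AddMonoidHom.mk'
      (fun n => AddMonoidHom.mk'
        (fun ω => n ⊗ₜ[AddMonoidAlgebra ℤ B] L2 ω)
        (fun ω₁ ω₂ => by
          show n ⊗ₜ[AddMonoidAlgebra ℤ B] L2 (ω₁ + ω₂)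
            = n ⊗ₜ[AddMonoidAlgebra ℤ B] L2 ω₁ + n ⊗ₜ[AddMonoidAlgebra ℤ B] L2 ω₂
          rw [map_add, TensorProduct.tmul_add]))
      (fun m n => by
        ext ω
        show (m + n) ⊗ₜ[AddMonoidAlgebra ℤ B] L2 ω = _
        rw [TensorProduct.add_tmul]
        rfl))
    (fun r n ω => by
      show (r • n) ⊗ₜ[AddMonoidAlgebra ℤ B] L2 ω
        = n ⊗ₜ[AddMonoidAlgebra ℤ B] L2 (r • ω)
      rw [map_smul, smul_B, ← TensorProduct.smul_tmul,
        aug_smul_int (A := A) r n, aug_smul_int (A := B) (ρ r) n, aug_rho]), ?_, ?_⟩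
  · intro n f
    show n ⊗ₜ[AddMonoidAlgebra ℤ B]
        L2 (KaehlerDifferential.D ℤ (AddMonoidAlgebra ℤ A) f) = _
    rw [Derivation.liftKaehlerDifferential_comp_D]
    rfl
  · intro α
    show (1:ℤ) ⊗ₜ[AddMonoidAlgebra ℤ B]
        L2 (KaehlerDifferential.D ℤ (AddMonoidAlgebra ℤ A)
          (AddMonoidAlgebra.of' ℤ A α)) = _
    rw [Derivation.liftKaehlerDifferential_comp_D]
    show (1:ℤ) ⊗ₜ[AddMonoidAlgebra ℤ B]
        KaehlerDifferential.D ℤ (AddMonoidAlgebra ℤ B) (ρ (AddMonoidAlgebra.single α 1)) = _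
    rw [rho_single]
    rfl
end
end

section
/- Let G be a finite group and R a commutative ring in which |G| is invertible. Let M be an R[G]-module on which G acts trivially and let N be an R[G]-module with N^G = 0. Then every R[G]-module homomorphism M → N is zero, every R[G]-module homomorphism N → M is zero, and moreover Ext^i_{R[G]}(M, N) = 0 and Ext^i_{R[G]}(N, M) = 0 for all i ≥ 0. -/
open CategoryTheory Limits Opposite

universe u v

noncomputable section

namespace OrthAux

variable {A : Type u} [Ring A]

/-- Multiplication by a central element, as an endomorphism in `ModuleCat A`. -/
def mulHom (e : A) (he : ∀ a : A, e * a = a * e) (X : ModuleCat.{u} A) : X ⟶ X := ModuleCat.ofHom {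
  toFun x := e • x
  map_add' x y := smul_add e x y
  map_smul' a x := by
    simp only [RingHom.id_apply]
    rw [smul_smul, smul_smul, he] }

lemma mulHom_natural (e : A) (he : ∀ a : A, e * a = a * e) {X Y : ModuleCat.{u} A}
    (f : X ⟶ Y) : mulHom e he X ≫ f = f ≫ mulHom e he Y := by
  ext x
  exact (f.hom.map_smul e x)

/-- If a central element `e` acts as the identity on `X` and as zero on `Y`, then
all the `Ext` groups `Ext^n(X, Y)` vanish. -/
theorem extIsZero (e : A) (he : ∀ a : A, e * a = a * e)
    (X Y : ModuleCat.{u} A)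
    (hX : ∀ x : X, e • x = x) (hY : ∀ y : Y, e • y = 0) (n : ℕ) :
    IsZero (((Ext ℤ (ModuleCat.{u} A) n).obj (op X)).obj Y) := by
  let P : ProjectiveResolution X := ProjectiveResolution.of X
  -- the chain endomorphism given by multiplication by `e`
  let η : P.complex ⟶ P.complex :=
    { f := fun i => mulHom e he _
      comm' := fun i j _ => mulHom_natural e he _ }
  -- `η` lifts the identity of `X`
  have hηπ : η ≫ P.π = P.π ≫ (ChainComplex.single₀ (ModuleCat.{u} A)).map (𝟙 X) := by
    rw [CategoryTheory.Functor.map_id, Category.comp_id]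
    apply (ChainComplex.toSingle₀Equiv _ _).injective
    apply Subtype.ext
    show (η ≫ P.π).f 0 = P.π.f 0
    rw [HomologicalComplex.comp_f]
    ext x
    show (P.π.f 0).hom (e • x) = (P.π.f 0).hom x
    rw [(P.π.f 0).hom.map_smul]
    exact hX _
  -- hence `η` is homotopic to the identity
  have h1 : Homotopy η (𝟙 P.complex) :=
    ProjectiveResolution.liftHomotopy (𝟙 X) η (𝟙 P.complex) hηπ (by simp)
  -- apply the (contravariant) functor `Hom(-, Y)`
  let F : ModuleCat.{u} A ⥤ (ModuleCat.{u} ℤ)ᵒᵖ :=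
    ((linearYoneda ℤ (ModuleCat.{u} A)).obj Y).rightOp
  let L : ChainComplex (ModuleCat.{u} A) ℕ ⥤
      HomologicalComplex (ModuleCat.{u} ℤ)ᵒᵖ (ComplexShape.down ℕ) :=
    F.mapHomologicalComplex _
  have hL0 : L.map η = 0 := by
    ext i
    apply Quiver.Hom.unop_inj
    ext (f : P.complex.X i ⟶ Y)
    show mulHom e he _ ≫ f = 0
    ext x
    show f.hom (e • x) = 0
    rw [f.hom.map_smul]
    exact hY _
  have h2 : HomologicalComplex.homologyMap (L.map η) n =
      HomologicalComplex.homologyMap (L.map (𝟙 P.complex)) n :=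
    (F.mapHomotopy h1).homologyMap_eq n
  have h3 : (𝟙 ((L.obj P.complex).homology n) : _) = 0 := by
    rw [← HomologicalComplex.homologyMap_id, ← L.map_id, ← h2, hL0,
      HomologicalComplex.homologyMap_zero]
  have h4 : IsZero ((L.obj P.complex).homology n) :=
    (IsZero.iff_id_eq_zero _).mpr h3
  refine IsZero.of_iso ?_ (P.isoExt n Y)
  refine IsZero.of_iso ?_ (HomologicalComplex.homologyUnop (L.obj P.complex) n)
  exact h4.unop

/-- If a central element acts as the identity on `X` and as zero on `Y`, every linear map
`X → Y` vanishes. -/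
lemma homZero (e : A) {X Y : Type u} [AddCommGroup X] [AddCommGroup Y]
    [Module A X] [Module A Y]
    (hX : ∀ x : X, e • x = x) (hY : ∀ y : Y, e • y = 0) (f : X →ₗ[A] Y) : f = 0 := by
  ext x
  rw [LinearMap.zero_apply, ← hX x, f.map_smul, hY]

section MonoidAlg

open Finset

variable {R : Type u} [CommRing R] {G : Type u} [Group G] [Fintype G]

/-- The averaging element `∑ g, u·g` of the monoid algebra. -/
noncomputable def eG (u : R) : MonoidAlgebra R G :=
  ∑ g : G, MonoidAlgebra.single g u

lemma of_mul_eG (u : R) (g : G) :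
    MonoidAlgebra.of R G g * eG u = eG u := by
  rw [eG, Finset.mul_sum]
  refine Fintype.sum_equiv (Equiv.mulLeft g) _ _ fun h => ?_
  simp [MonoidAlgebra.of_apply, MonoidAlgebra.single_mul_single]

lemma eG_mul_of (u : R) (g : G) :
    eG u * MonoidAlgebra.of R G g = eG u := by
  rw [eG, Finset.sum_mul]
  refine Fintype.sum_equiv (Equiv.mulRight g) _ _ fun h => ?_
  simp [MonoidAlgebra.of_apply, MonoidAlgebra.single_mul_single]

lemma eG_central (u : R) : ∀ a : MonoidAlgebra R G, eG u * a = a * eG u := by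
  intro a
  induction a using MonoidAlgebra.induction_linear with
  | zero => simp
  | add f g hf hg => rw [mul_add, add_mul, hf, hg]
  | single g r =>
    show eG u * MonoidAlgebra.single g r = MonoidAlgebra.single g r * eG u
    have h1 : (MonoidAlgebra.single g r : MonoidAlgebra R G) =
        MonoidAlgebra.of R G g * MonoidAlgebra.single 1 r := by
      rw [MonoidAlgebra.of_apply, MonoidAlgebra.single_mul_single, mul_one, one_mul]
    rw [h1, ← mul_assoc, eG_mul_of, mul_assoc, MonoidAlgebra.single_one_comm r (eG u),
      ← mul_assoc, of_mul_eG]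

lemma eG_smul_triv (u : R) (hu : (Fintype.card G : R) * u = 1)
    (M : Type u) [AddCommGroup M] [Module (MonoidAlgebra R G) M]
    (hM : ∀ (g : G) (m : M), MonoidAlgebra.of R G g • m = m) (m : M) :
    (eG u : MonoidAlgebra R G) • m = m := by
  have h1 : ∀ g : G, (MonoidAlgebra.single g u : MonoidAlgebra R G) • m =
      (MonoidAlgebra.single 1 u : MonoidAlgebra R G) • m := by
    intro g
    have : (MonoidAlgebra.single g u : MonoidAlgebra R G) =
        MonoidAlgebra.single 1 u * MonoidAlgebra.of R G g := by
      rw [MonoidAlgebra.of_apply, MonoidAlgebra.single_mul_single, mul_one, one_mul]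
    rw [this, mul_smul (MonoidAlgebra.single (1:G) u) (MonoidAlgebra.of R G g) m, hM]
  rw [eG, Finset.sum_smul]
  simp only [h1]
  rw [Finset.sum_const, Finset.card_univ, ← smul_assoc]
  have h2 : (Fintype.card G : ℕ) • (MonoidAlgebra.single 1 u : MonoidAlgebra R G) =
      (1 : MonoidAlgebra R G) := by
    rw [MonoidAlgebra.smul_single, MonoidAlgebra.one_def]
    congr 1
    rw [← Nat.cast_smul_eq_nsmul R, smul_eq_mul, hu]
  rw [h2, one_smul]

lemma eG_smul_zero (u : R)
    (N : Type u) [AddCommGroup N] [Module (MonoidAlgebra R G) N]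
    (hN : ∀ x : N, (∀ g : G, MonoidAlgebra.of R G g • x = x) → x = 0) (x : N) :
    (eG u : MonoidAlgebra R G) • x = 0 := by
  refine hN _ fun g => ?_
  rw [← mul_smul, of_mul_eG]

end MonoidAlg

end OrthAux

end

open OrthAux in
/-- **Orthogonality lemma, neutral affine case** (Lemma following Theorem A.2).  Let `G` be a
finite group and `R` a commutative ring in which `|G|` is invertible.  Let `M` be an
`R[G]`-module with trivial `G`-action and `N` an `R[G]`-module with `N^G = 0`.  Then every
`R[G]`-module homomorphism `M → N` or `N → M` is zero, and `Ext^i_{R[G]}(M, N) = 0` and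
`Ext^i_{R[G]}(N, M) = 0` for all `i ≥ 0`. -/
theorem stmt_11 {R : Type u} [CommRing R] {G : Type u} [Group G] [Fintype G]
    (u : R) (hu : (Fintype.card G : R) * u = 1)
    (M : Type u) [AddCommGroup M] [Module (MonoidAlgebra R G) M]
    (N : Type u) [AddCommGroup N] [Module (MonoidAlgebra R G) N]
    (hM : ∀ (g : G) (m : M), MonoidAlgebra.of R G g • m = m)
    (hN : ∀ x : N, (∀ g : G, MonoidAlgebra.of R G g • x = x) → x = 0) :
    (∀ f : M →ₗ[MonoidAlgebra R G] N, f = 0) ∧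
    (∀ f : N →ₗ[MonoidAlgebra R G] M, f = 0) ∧
    (∀ i : ℕ,
      Limits.IsZero (((Ext ℤ (ModuleCat.{u} (MonoidAlgebra R G)) i).obj
        (Opposite.op (ModuleCat.of (MonoidAlgebra R G) M))).obj
          (ModuleCat.of (MonoidAlgebra R G) N)) ∧
      Limits.IsZero (((Ext ℤ (ModuleCat.{u} (MonoidAlgebra R G)) i).obj
        (Opposite.op (ModuleCat.of (MonoidAlgebra R G) N))).obj
          (ModuleCat.of (MonoidAlgebra R G) M))) := by
  set A := MonoidAlgebra R G
  set e : A := eG u with he_def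
  have he : ∀ a : A, e * a = a * e := eG_central u
  have he' : ∀ a : A, (1 - e) * a = a * (1 - e) := fun a => by
    rw [sub_mul, mul_sub, one_mul, mul_one, he]
  have hMe : ∀ m : M, e • m = m := eG_smul_triv u hu M hM
  have hNe : ∀ x : N, e • x = 0 := eG_smul_zero u N hN
  have hMe' : ∀ m : M, (1 - e) • m = 0 := fun m => by
    rw [sub_smul, one_smul, hMe, sub_self]
  have hNe' : ∀ x : N, (1 - e) • x = x := fun x => by
    rw [sub_smul, one_smul, hNe, sub_zero]
  refine ⟨homZero e hMe hNe, homZero (1 - e) hNe' hMe', fun i => ?_⟩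
  exact ⟨extIsZero e he (ModuleCat.of A M) (ModuleCat.of A N) hMe hNe i,
    extIsZero (1 - e) he' (ModuleCat.of A N) (ModuleCat.of A M) hNe' hMe' i⟩
end

section
/- Let G be a finite group and R a commutative ring in which |G| is invertible, set e = |G|^{-1} · Σ_{g ∈ G} g in R[G], and let Q = (1−e)·R[G]. Then: (1) Q is a projective R[G]-module and R[G] = e·R[G] ⊕ Q; (2) Q^G = 0; and (3) every R[G]-module N with N^G = 0 admits a surjective R[G]-module homomorphism from a direct sum of copies of Q. -/
universe u

/-- Right multiplication by a fixed element, as a left-module endomorphism. -/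
def stmt12MulRight {A : Type u} [Ring A] (a : A) : A →ₗ[A] A where
  toFun x := x * a
  map_add' x y := add_mul x y a
  map_smul' r x := by simp [smul_eq_mul, mul_assoc]

@[simp] theorem stmt12MulRight_apply {A : Type u} [Ring A] (a x : A) :
    stmt12MulRight a x = x * a := rfl

/-- **Projective generator for purely non-trivial modules** (proof of the Lemma following
Theorem A.2).  Let `G` be a finite group and `R` a commutative ring in which `|G|` is
invertible (with inverse `u`), set `e = u • Σ_{g ∈ G} g` in `R[G]` and `Q = (1−e)·R[G]`.
Then: (1) `Q` is a projective `R[G]`-module and `R[G] = e·R[G] ⊕ Q`; (2) `Q^G = 0`; and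
(3) every `R[G]`-module `N` with `N^G = 0` admits a surjection from a direct sum of copies
of `Q`. -/
theorem stmt_12 {R : Type u} [CommRing R] {G : Type u} [Group G] [Fintype G]
    (u : R) (hu : (Fintype.card G : R) * u = 1)
    (e : MonoidAlgebra R G) (he : e = u • ∑ g : G, MonoidAlgebra.of R G g) :
    ∃ P Q : Submodule (MonoidAlgebra R G) (MonoidAlgebra R G),
      (P : Set (MonoidAlgebra R G)) = Set.range (fun x : MonoidAlgebra R G => e * x) ∧
      (Q : Set (MonoidAlgebra R G)) = Set.range (fun x : MonoidAlgebra R G => (1 - e) * x) ∧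
      -- (1) `Q` is projective and `R[G] = e·R[G] ⊕ Q`
      Module.Projective (MonoidAlgebra R G) ↥Q ∧
      IsCompl P Q ∧
      -- (2) `Q^G = 0`
      (∀ x ∈ Q, (∀ g : G, MonoidAlgebra.of R G g • x = x) → x = 0) ∧
      -- (3) every module `N` with `N^G = 0` is a quotient of a direct sum of copies of `Q`
      (∀ (N : Type u) [AddCommGroup N] [Module (MonoidAlgebra R G) N],
        (∀ x : N, (∀ g : G, MonoidAlgebra.of R G g • x = x) → x = 0) →
        ∃ (ι : Type u) (f : (ι →₀ ↥Q) →ₗ[MonoidAlgebra R G] N), Function.Surjective f) := by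
  -- `e * of g = e` and `of g * e = e`
  have he1 : ∀ g : G, e * MonoidAlgebra.of R G g = e := by
    intro g
    rw [he, smul_mul_assoc, Finset.sum_mul]
    congr 1
    refine Fintype.sum_equiv (Equiv.mulRight g) _ _ (fun h => ?_)
    simp [MonoidAlgebra.of_apply, MonoidAlgebra.single_mul_single]
  have he2 : ∀ g : G, MonoidAlgebra.of R G g * e = e := by
    intro g
    rw [he, mul_smul_comm, Finset.mul_sum]
    congr 1
    refine Fintype.sum_equiv (Equiv.mulLeft g) _ _ (fun h => ?_)
    simp [MonoidAlgebra.of_apply, MonoidAlgebra.single_mul_single]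
  -- `e` is idempotent
  have hee : e * e = e := by
    nth_rewrite 2 [he]
    rw [mul_smul_comm, Finset.mul_sum]
    simp only [he1]
    rw [Finset.sum_const, Finset.card_univ, ← Nat.cast_smul_eq_nsmul R, smul_smul,
      mul_comm u, hu, one_smul]
  -- `e` is central
  have hcentral : ∀ x : MonoidAlgebra R G, e * x = x * e := by
    intro x
    refine MonoidAlgebra.induction_on (motive := fun y => e * y = y * e) x (fun g => ?_) (fun f g hf hg => ?_)
      (fun r f hf => ?_)
    · rw [he1, he2]
    · rw [mul_add, add_mul, hf, hg]
    · rw [mul_smul_comm, smul_mul_assoc, hf]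
  set P : Submodule (MonoidAlgebra R G) (MonoidAlgebra R G) :=
    LinearMap.range (stmt12MulRight e) with hP
  set Q : Submodule (MonoidAlgebra R G) (MonoidAlgebra R G) :=
    LinearMap.range (stmt12MulRight (1 - e)) with hQ
  have hQ1 : (1 - e) * (1 - e) = (1 - e) := by
    rw [sub_mul, one_mul, mul_sub, mul_one, hee, sub_self, sub_zero]
  have hmemQ : ∀ x ∈ Q, x * (1 - e) = x := by
    rintro x ⟨y, rfl⟩
    simp only [stmt12MulRight_apply]
    rw [mul_assoc, hQ1]
  have hmemP : ∀ x ∈ P, x * e = x := by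
    rintro x ⟨y, rfl⟩
    simp only [stmt12MulRight_apply]
    rw [mul_assoc, hee]
  refine ⟨P, Q, ?_, ?_, ?_, ?_, ?_, ?_⟩
  · ext x
    simp only [hP, SetLike.mem_coe, LinearMap.mem_range, stmt12MulRight_apply, Set.mem_range]
    constructor
    · rintro ⟨y, rfl⟩; exact ⟨y, hcentral y⟩
    · rintro ⟨y, rfl⟩; exact ⟨y, (hcentral y).symm⟩
  · ext x
    simp only [hQ, SetLike.mem_coe, LinearMap.mem_range, stmt12MulRight_apply, Set.mem_range]
    have key : ∀ y : MonoidAlgebra R G, y * (1 - e) = (1 - e) * y := by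
      intro y
      rw [mul_sub, sub_mul, one_mul, mul_one, hcentral]
    constructor
    · rintro ⟨y, rfl⟩; exact ⟨y, (key y).symm⟩
    · rintro ⟨y, rfl⟩; exact ⟨y, key y⟩
  -- projectivity
  · refine Module.Projective.of_split Q.subtype
      { toFun := fun x => ⟨x * (1 - e), ⟨x, rfl⟩⟩
        map_add' := fun x y => Subtype.ext (add_mul x y _)
        map_smul' := fun r x => Subtype.ext (by simp [smul_eq_mul, mul_assoc]) } ?_
    apply LinearMap.ext
    intro x
    simp only [LinearMap.comp_apply, Submodule.coe_subtype, LinearMap.id_coe, id_eq,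
      LinearMap.coe_mk, AddHom.coe_mk]
    refine Subtype.ext ?_
    exact hmemQ (x : MonoidAlgebra R G) x.2
  -- IsCompl
  · constructor
    · rw [disjoint_iff]
      ext x
      simp only [Submodule.mem_inf, Submodule.mem_bot]
      constructor
      · rintro ⟨hxP, hxQ⟩
        have h1 := hmemP x hxP
        have h2 := hmemQ x hxQ
        rw [mul_sub, mul_one, h1, sub_self] at h2
        exact h2.symm
      · rintro rfl; exact ⟨Submodule.zero_mem _, Submodule.zero_mem _⟩
    · rw [codisjoint_iff, eq_top_iff]
      intro x _
      have hx : x = x * e + x * (1 - e) := by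
        rw [mul_sub, mul_one, add_sub_cancel]
      rw [hx]
      exact Submodule.add_mem _ (Submodule.mem_sup_left ⟨x, rfl⟩)
        (Submodule.mem_sup_right ⟨x, rfl⟩)
  -- (2)
  · intro x hx hgx
    have hgx' : ∀ g : G, MonoidAlgebra.of R G g * x = x := fun g => hgx g
    have hex : e * x = x := by
      rw [he, smul_mul_assoc, Finset.sum_mul]
      simp only [hgx']
      rw [Finset.sum_const, Finset.card_univ, ← Nat.cast_smul_eq_nsmul R, smul_smul,
        mul_comm u, hu, one_smul]
    have h2 := hmemQ x hx
    rw [mul_sub, mul_one, ← hcentral, hex, sub_self] at h2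
    exact h2.symm
  -- (3)
  · intro N _ _ hN
    refine ⟨N, Finsupp.lsum ℕ (fun n =>
      { toFun := fun q : Q => (q : MonoidAlgebra R G) • n
        map_add' := fun q1 q2 => by
          show ((q1 + q2 : Q) : MonoidAlgebra R G) • n = _
          rw [Submodule.coe_add, add_smul]
        map_smul' := fun r q => by
          show ((r • q : Q) : MonoidAlgebra R G) • n = r • ((q : MonoidAlgebra R G) • n)
          rw [Submodule.coe_smul, smul_eq_mul, mul_smul] }), fun n => ?_⟩
    have hinv : e • n = 0 := by
      refine hN (e • n) (fun g => ?_)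
      rw [← mul_smul, he2]
    have h1e : ((1 : MonoidAlgebra R G) - e) ∈ Q := ⟨1, by simp⟩
    refine ⟨Finsupp.single n ⟨(1 : MonoidAlgebra R G) - e, h1e⟩, ?_⟩
    simp only [Finsupp.lsum_single, LinearMap.coe_mk, AddHom.coe_mk]
    rw [sub_smul, one_smul, hinv, sub_zero]
end
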